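/- Let ω be an integrable homogeneous 1-form defining a codimension-one degree-e foliation of ℙⁿ (hypotheses (H1)–(H4)). If the singular ideal J(ω) is a radical ideal, then the Kupka ideal equals the vanishing ideal of the set-theoretic Kupka set of the affine cone: K(ω) = MvPolynomial.vanishingIdeal { x : Fin (n+1) → ℂ | (∀ i, eval x (f i) = 0) ∧ (∃ i j, eval x (D i j) ≠ 0) }. (Since the vanishing ideal of a set equals that of its Zariski closure, this says the Kupka scheme Kup(ω) coincides with the Kupka set 𝒦_set.) -/

import Mathlib

open MvPolynomial

/-- **If `J(ω)` is radical then the Kupka scheme coincides with the Kupka set:**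
the Kupka ideal `K(ω)` equals the vanishing ideal of the set-theoretic Kupka set
of the affine cone, `{x | ω(x) = 0 and dω(x) ≠ 0}`. -/
theorem kupka_eq_vanishingIdeal_kupkaSet (n e : ℕ) (hn : 2 ≤ n) (he : 2 ≤ e)
    (f : Fin (n+1) → MvPolynomial (Fin (n+1)) ℂ)
    (D : Fin (n+1) → Fin (n+1) → MvPolynomial (Fin (n+1)) ℂ)
    (hD : ∀ i j, D i j = pderiv i (f j) - pderiv j (f i))
    (H1 : ∀ i, (f i).IsHomogeneous (e - 1)) (H1' : ∃ i, f i ≠ 0)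
    (H2 : ∑ i, X i * f i = 0)
    (H3 : ∀ i j k, f i * D j k - f j * D i k + f k * D i j = 0)
    (H4 : ∀ g : MvPolynomial (Fin (n+1)) ℂ, (∀ i, g ∣ f i) → IsUnit g)
    (J : Ideal (MvPolynomial (Fin (n+1)) ℂ)) (hJ : J = Ideal.span (Set.range f))
    (K : Ideal (MvPolynomial (Fin (n+1)) ℂ))
    (hK : K = J.colon (Ideal.span {p | ∃ i j, D i j = p}))
    (hJrad : J.IsRadical) :
    K = MvPolynomial.vanishingIdeal ℂ
      {x : Fin (n+1) → ℂ | (∀ i, eval x (f i) = 0) ∧ ∃ i j, eval x (D i j) ≠ 0} := by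
  have hNull : J = MvPolynomial.vanishingIdeal ℂ (MvPolynomial.zeroLocus ℂ J) := by
    rw [MvPolynomial.vanishingIdeal_zeroLocus_eq_radical, hJrad.radical]
  -- evaluation of elements of J at points where all f i vanish is 0
  have hevalJ : ∀ (x : Fin (n+1) → ℂ), (∀ i, eval x (f i) = 0) →
      ∀ p ∈ J, eval x p = 0 := by
    intro x hx p hp
    have : J ≤ RingHom.ker (eval x) := by
      rw [hJ, Ideal.span_le]
      rintro _ ⟨i, rfl⟩
      exact hx i
    exact this hp
  ext g
  rw [hK, MvPolynomial.mem_vanishingIdeal_iff]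
  constructor
  · intro hg x hx
    obtain ⟨hx1, i, j, hx2⟩ := hx
    have hDij : D i j ∈ Ideal.span {p | ∃ i j, D i j = p} :=
      Ideal.subset_span ⟨i, j, rfl⟩
    have hmem : g * D i j ∈ J := by
      have := Submodule.mem_colon.mp hg (D i j) hDij
      simpa [smul_eq_mul] using this
    have h0 : eval x (g * D i j) = 0 := hevalJ x hx1 _ hmem
    rw [map_mul] at h0
    exact (mul_eq_zero.mp h0).resolve_right hx2
  · intro hg
    rw [Submodule.mem_colon]
    intro p hp
    -- reduce to generators
    have key : ∀ i j, g * D i j ∈ J := by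
      intro i j
      rw [hNull, MvPolynomial.mem_vanishingIdeal_iff]
      intro x hx
      have hfx : ∀ k, eval x (f k) = 0 := by
        intro k
        exact hx (f k) (hJ ▸ Ideal.subset_span ⟨k, rfl⟩)
      rw [map_mul]
      by_cases hDx : ∃ i j, eval x (D i j) ≠ 0
      · rw [hg x ⟨hfx, hDx⟩, zero_mul]
      · push_neg at hDx
        rw [show aeval x (D i j) = 0 from hDx i j, mul_zero]
    have hp' : p ∈ Ideal.span {p | ∃ i j, D i j = p} := hp
    refine Submodule.span_induction ?_ ?_ ?_ ?_ hp'
    · rintro q ⟨i, j, rfl⟩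
      simpa [smul_eq_mul] using key i j
    · simp
    · intro a b _ _ ha hb
      simpa [smul_add, mul_add] using J.add_mem ha hb
    · intro c a _ ha
      rw [smul_comm]
      exact J.smul_mem c ha
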